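/- If 0 < λ_1 ≤ λ_2 ≤ ... ≤ λ_m, then 1 + λ_m E_1 + λ_{m-1}λ_m E_2 + ... + λ_1λ_2⋯λ_m E_m ≥ ∏_{i=1}^m (1 + λ_i²), where E_k is the k-th elementary symmetric function of λ_1,...,λ_m. -/

import Mathlib

open Finset

/-- The `k`-th elementary symmetric function of `l 0, ..., l (m-1)`. -/
def esymmVal (m : ℕ) (l : Fin m → ℝ) (k : ℕ) : ℝ :=
  ∑ s ∈ Finset.powersetCard k (Finset.univ : Finset (Fin m)), ∏ i ∈ s, l i

/-- The product of the top `k` values `l (m-k) ⋯ l (m-1)`. -/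
def topProd (m : ℕ) (l : Fin m → ℝ) (k : ℕ) : ℝ :=
  ∏ i ∈ Finset.univ.filter (fun i : Fin m => m - k ≤ (i : ℕ)), l i

lemma strictMono_add_le {k m : ℕ} (g : Fin k → Fin m) (hg : StrictMono g) :
    ∀ (d j : ℕ) (h : j + d < k), (g ⟨j, by omega⟩ : ℕ) + d ≤ (g ⟨j + d, h⟩ : ℕ) := by
  intro d
  induction d with
  | zero => intro j h; simp
  | succ n ih =>
    intro j h
    have h1 : j + n < k := by omega
    have h2 := ih j h1
    have h3 : (g ⟨j + n, h1⟩ : ℕ) < (g ⟨j + (n + 1), h⟩ : ℕ) := by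
      apply hg
      simp [Fin.lt_def]
    omega

lemma strictMono_le_bound {k m : ℕ} (g : Fin k → Fin m) (hg : StrictMono g) (j : Fin k) :
    (g j : ℕ) ≤ m - k + j := by
  have hj := j.2
  have hlast : (j : ℕ) + (k - 1 - j) < k := by omega
  have h1 := strictMono_add_le g hg (k - 1 - j) j hlast
  have h2 : (g ⟨(j : ℕ) + (k - 1 - (j : ℕ)), hlast⟩ : ℕ) < m := (g _).2
  have h3 : (g ⟨(j : ℕ), by omega⟩ : ℕ) = (g j : ℕ) := by congr
  omega

lemma topProd_eq (m k : ℕ) (hk : k ≤ m) (l : Fin m → ℝ) :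
    topProd m l k = ∏ j : Fin k, l ⟨m - k + j, by omega⟩ := by
  have hset : Finset.univ.filter (fun i : Fin m => m - k ≤ (i : ℕ))
      = Finset.image (fun j : Fin k => (⟨m - k + j, by omega⟩ : Fin m)) Finset.univ := by
    ext i
    simp only [mem_filter, mem_univ, true_and, mem_image]
    constructor
    · intro h
      have hi := i.2
      exact ⟨⟨(i : ℕ) - (m - k), by omega⟩, by apply Fin.ext; simp; omega⟩
    · rintro ⟨j, rfl⟩
      simp
  rw [topProd, hset, Finset.prod_image]
  intro a _ b _ hab
  have : (m - k + (a : ℕ)) = (m - k + (b : ℕ)) := congrArg Fin.val hab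
  exact Fin.ext (by omega)

lemma prod_le_topProd (m k : ℕ) (hk : k ≤ m) (l : Fin m → ℝ) (hl : ∀ i, 0 < l i)
    (hmono : Monotone l) (S : Finset (Fin m)) (hS : S.card = k) :
    ∏ i ∈ S, l i ≤ topProd m l k := by
  have hSim : S = Finset.image (S.orderEmbOfFin hS) Finset.univ := by
    apply Finset.coe_injective
    rw [Finset.coe_image, Finset.coe_univ, Set.image_univ, Finset.range_orderEmbOfFin]
  have hSprod : ∏ i ∈ S, l i = ∏ j : Fin k, l (S.orderEmbOfFin hS j) := by
    rw [← Finset.prod_image (fun a _ b _ h => (S.orderEmbOfFin hS).injective h)]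
    exact Finset.prod_congr hSim (fun _ _ => rfl)
  rw [topProd_eq m k hk l, hSprod]
  apply Finset.prod_le_prod (fun j _ => (hl _).le)
  intro j _
  apply hmono
  have := strictMono_le_bound (S.orderEmbOfFin hS) (S.orderEmbOfFin hS).strictMono j
  exact this

theorem stmt4 (m : ℕ) (l : Fin m → ℝ) (hl : ∀ i, 0 < l i) (hmono : Monotone l) :
    ∏ i : Fin m, (1 + (l i) ^ 2)
      ≤ ∑ k ∈ Finset.range (m + 1), topProd m l k * esymmVal m l k := by
  have hexp : ∏ i : Fin m, (1 + (l i) ^ 2)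
      = ∑ k ∈ Finset.range (m + 1), ∑ t ∈ Finset.powersetCard k (Finset.univ : Finset (Fin m)),
          ∏ i ∈ t, (l i) ^ 2 := by
    have h1 : ∀ i : Fin m, (1 : ℝ) + (l i) ^ 2 = (l i) ^ 2 + 1 := fun i => by ring
    rw [Finset.prod_congr rfl (fun i _ => h1 i),
      Finset.prod_add (fun i => (l i) ^ 2) (fun _ => (1 : ℝ))]
    simp only [Finset.prod_const_one, mul_one]
    rw [Finset.sum_powerset]
    simp
  rw [hexp]
  apply Finset.sum_le_sum
  intro k hk
  rw [esymmVal, Finset.mul_sum]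
  apply Finset.sum_le_sum
  intro t ht
  rw [Finset.mem_powersetCard] at ht
  have hkm : k ≤ m := by
    rw [← ht.2]
    simpa using Finset.card_le_card ht.1
  have h2 : ∏ i ∈ t, (l i) ^ 2 = (∏ i ∈ t, l i) * ∏ i ∈ t, l i := by
    rw [← Finset.prod_mul_distrib]
    exact Finset.prod_congr rfl (fun i _ => sq (l i))
  rw [h2]
  apply mul_le_mul_of_nonneg_right (prod_le_topProd m k hkm l hl hmono t ht.2)
  exact Finset.prod_nonneg (fun i _ => (hl i).le)
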